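/- If n ≥ 1 is an integer and ε is a real number with ε > 0 and nε < 1, then (1 + 2ε + nε²)^{n/2} < 1/(1 − nε). -/

import Mathlib

open Real in
private lemma key_log_ineq (t : ℝ) (h0 : 0 < t) (h1 : t < 1) :
    t + t ^ 2 / 2 < -Real.log (1 - t) := by
  set f : ℝ → ℝ := fun x => -Real.log (1 - x) - x - x ^ 2 / 2 with hf
  have hderiv : ∀ x ∈ Set.Ico (0:ℝ) 1, HasDerivAt f (1 / (1 - x) - 1 - x) x := by
    intro x hx
    have hx1 : (1 : ℝ) - x ≠ 0 := by
      have := hx.2; intro h; linarith [hx.2]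
    have h1 : HasDerivAt (fun x : ℝ => 1 - x) (-1) x := by
      simpa using (hasDerivAt_id x).const_sub 1
    have hlog : HasDerivAt (fun x : ℝ => Real.log (1 - x)) ((1 - x)⁻¹ * (-1)) x :=
      (Real.hasDerivAt_log hx1).comp x h1
    have hsq : HasDerivAt (fun x : ℝ => x ^ 2 / 2) (x) x := by
      have := (hasDerivAt_pow 2 x).div_const 2
      simpa using this
    have := ((hlog.neg).sub (hasDerivAt_id x)).sub hsq
    refine this.congr_deriv ?_
    ring
  have hmono : StrictMonoOn f (Set.Ico (0:ℝ) 1) := by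
    apply strictMonoOn_of_deriv_pos (convex_Ico 0 1)
    · apply ContinuousOn.sub
      apply ContinuousOn.sub
      · apply ContinuousOn.neg
        apply ContinuousOn.log (by fun_prop)
        intro x hx
        intro h; linarith [hx.2]
      · exact continuousOn_id
      · fun_prop
    · intro x hx
      rw [interior_Ico] at hx
      have hx0 : 0 < x := hx.1
      have hx1 : x < 1 := hx.2
      rw [(hderiv x ⟨le_of_lt hx0, hx1⟩).deriv]
      have h1x : 0 < 1 - x := by linarith
      have heq : 1 / (1 - x) - 1 - x = x ^ 2 / (1 - x) := by
        field_simp; ring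
      rw [heq]
      positivity
  have h0' : f 0 = 0 := by simp [hf]
  have := hmono ⟨le_refl 0, by norm_num⟩ ⟨le_of_lt h0, h1⟩ h0
  rw [h0'] at this
  simp only [hf] at this
  linarith

theorem upper_bound_lt_ostrowski
    (n : ℕ) (hn : 1 ≤ n) (ε : ℝ) (hε : 0 < ε) (hsize : (n : ℝ) * ε < 1) :
    (1 + 2 * ε + (n : ℝ) * ε ^ 2) ^ ((n : ℝ) / 2) < 1 / (1 - (n : ℝ) * ε) := by
  have hn1 : (1 : ℝ) ≤ (n : ℝ) := by exact_mod_cast hn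
  set a : ℝ := 1 + 2 * ε + (n : ℝ) * ε ^ 2 with ha
  set t : ℝ := (n : ℝ) * ε with ht
  have ht0 : 0 < t := by positivity
  have ha1 : 1 < a := by nlinarith
  have ha0 : 0 < a := by linarith
  have h1t : 0 < 1 - t := by linarith
  -- log a ≤ a - 1
  have hlog : Real.log a ≤ 2 * ε + (n : ℝ) * ε ^ 2 := by
    have := Real.log_le_sub_one_of_pos ha0
    linarith
  have hkey : t + t ^ 2 / 2 < -Real.log (1 - t) := key_log_ineq t ht0 hsize
  have hexp : a ^ ((n : ℝ) / 2) = Real.exp (Real.log a * ((n : ℝ) / 2)) :=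
    Real.rpow_def_of_pos ha0 _
  rw [hexp]
  have hbound : Real.log a * ((n : ℝ) / 2) < -Real.log (1 - t) := by
    have h2 : Real.log a * ((n : ℝ) / 2) ≤ (2 * ε + (n : ℝ) * ε ^ 2) * ((n : ℝ) / 2) := by
      apply mul_le_mul_of_nonneg_right hlog
      positivity
    have h3 : (2 * ε + (n : ℝ) * ε ^ 2) * ((n : ℝ) / 2) = t + t ^ 2 / 2 := by
      rw [ht]; ring
    linarith
  calc Real.exp (Real.log a * ((n : ℝ) / 2)) < Real.exp (-Real.log (1 - t)) :=
        Real.exp_lt_exp.mpr hbound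
    _ = 1 / (1 - t) := by
        rw [Real.exp_neg, Real.exp_log h1t, one_div]
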